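/- For every natural number n, ∏_{i=0}^{n−1} [ i!·(i+1)!·(3i+1)!·(3i+4)! ] / [ (2i)!·(2i+1)!·(2i+2)!·(2i+3)! ] = A(n)·A(n+1), as an identity of rational numbers, where A(m) = ∏_{i=0}^{m−1} (3i+1)!/(m+i)!. -/

import Mathlib

open Finset

private lemma pairL (f : ℕ → ℚ) (n : ℕ) :
    ∏ i ∈ range n, (f (2*i) * f (2*i+1)) = ∏ i ∈ range (2*n), f i := by
  induction n with
  | zero => simp
  | succ n ih =>
    rw [prod_range_succ, ih]
    have h : 2*(n+1) = 2*n + 1 + 1 := by ring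
    rw [h]
    conv_rhs => rw [prod_range_succ, prod_range_succ]
    ring

private lemma pairL2 (f : ℕ → ℚ) (n : ℕ) :
    f 0 * f 1 * ∏ i ∈ range n, (f (2*i+2) * f (2*i+3)) = ∏ i ∈ range (2*n+2), f i := by
  induction n with
  | zero => simp [Finset.prod_range_succ]
  | succ n ih =>
    rw [prod_range_succ, ← mul_assoc, ih]
    have h : 2*(n+1)+2 = 2*n + 2 + 1 + 1 := by ring
    rw [h]
    conv_rhs => rw [prod_range_succ, prod_range_succ]
    ring

private lemma shiftL (f : ℕ → ℚ) (n : ℕ) :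
    (∏ i ∈ range n, f i) * ∏ i ∈ range n, f (n + i) = ∏ i ∈ range (2*n), f i := by
  rw [two_mul, Finset.prod_range_add]

private lemma shiftB (n : ℕ) :
    ∏ i ∈ range (n+1), ((3*i+1).factorial : ℚ) = ∏ i ∈ range n, ((3*i+4).factorial : ℚ) := by
  rw [Finset.prod_range_succ']
  simp only [Nat.mul_succ]
  norm_num

private lemma shiftS (n : ℕ) :
    ∏ i ∈ range (n+1), ((i).factorial : ℚ) = ∏ i ∈ range n, ((i+1).factorial : ℚ) := by
  rw [Finset.prod_range_succ']
  simp

private lemma Sne (m : ℕ) : (∏ i ∈ range m, ((i).factorial : ℚ)) ≠ 0 :=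
  Finset.prod_ne_zero_iff.mpr fun i _ => Nat.cast_ne_zero.mpr i.factorial_ne_zero

private lemma Cne (m : ℕ) : (∏ i ∈ range m, ((m+i).factorial : ℚ)) ≠ 0 :=
  Finset.prod_ne_zero_iff.mpr fun i _ => Nat.cast_ne_zero.mpr (m+i).factorial_ne_zero

/-- The alternating-sign-matrix counting product `A(m) = ∏_{i=0}^{m-1} (3i+1)!/(m+i)!`,
regarded as a rational number. -/
noncomputable def asmA (m : ℕ) : ℚ :=
  ∏ i ∈ Finset.range m, ((3 * i + 1).factorial : ℚ) / ((m + i).factorial : ℚ)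

/-- The closed product formula for the number of qCSSCPPs of size `2n+1`:
`∏_{i=0}^{n−1} i!·(i+1)!·(3i+1)!·(3i+4)! / ((2i)!·(2i+1)!·(2i+2)!·(2i+3)!) = A(n)·A(n+1)`. -/
theorem qCSSCPP_product_eq (n : ℕ) :
    (∏ i ∈ Finset.range n,
        ((i.factorial : ℚ) * ((i + 1).factorial : ℚ) * ((3 * i + 1).factorial : ℚ) *
            ((3 * i + 4).factorial : ℚ)) /
          (((2 * i).factorial : ℚ) * ((2 * i + 1).factorial : ℚ) *
            ((2 * i + 2).factorial : ℚ) * ((2 * i + 3).factorial : ℚ)))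
      = asmA n * asmA (n + 1) := by
  have hA : ∀ m, asmA m = (∏ i ∈ range m, ((3*i+1).factorial : ℚ)) /
      (∏ i ∈ range m, ((m+i).factorial : ℚ)) := by
    intro m; rw [asmA, Finset.prod_div_distrib]
  rw [Finset.prod_div_distrib]
  simp only [Finset.prod_mul_distrib]
  rw [hA, hA]
  -- rewrite numerator pieces
  rw [← shiftS n, ← shiftB n]
  -- rewrite denominator pieces
  have hQ12 : (∏ i ∈ range n, ((2*i).factorial : ℚ)) * ∏ i ∈ range n, ((2*i+1).factorial : ℚ)
      = ∏ i ∈ range (2*n), ((i).factorial : ℚ) := by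
    rw [← pairL (fun i => ((i).factorial : ℚ)) n, Finset.prod_mul_distrib]
  have hQ34 : (∏ i ∈ range n, ((2*i+2).factorial : ℚ)) * ∏ i ∈ range n, ((2*i+3).factorial : ℚ)
      = ∏ i ∈ range (2*n+2), ((i).factorial : ℚ) := by
    rw [← pairL2 (fun i => ((i).factorial : ℚ)) n, Finset.prod_mul_distrib]
    norm_num
  have hS1 : (∏ i ∈ range n, ((i).factorial : ℚ)) * ∏ i ∈ range n, ((n+i).factorial : ℚ)
      = ∏ i ∈ range (2*n), ((i).factorial : ℚ) := shiftL _ n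
  have hS2 : (∏ i ∈ range (n+1), ((i).factorial : ℚ)) * ∏ i ∈ range (n+1), (((n+1)+i).factorial : ℚ)
      = ∏ i ∈ range (2*n+2), ((i).factorial : ℚ) := by
    have := shiftL (fun i => ((i).factorial : ℚ)) (n+1)
    simpa [two_mul, Nat.add_assoc, Nat.add_comm, Nat.add_left_comm] using this
  have hden : (((∏ i ∈ range n, ((2*i).factorial : ℚ)) * ∏ i ∈ range n, ((2*i+1).factorial : ℚ)) *
        ∏ i ∈ range n, ((2*i+2).factorial : ℚ)) * ∏ i ∈ range n, ((2*i+3).factorial : ℚ)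
      = ((∏ i ∈ range n, ((i).factorial : ℚ)) * ∏ i ∈ range n, ((n+i).factorial : ℚ)) *
        ((∏ i ∈ range (n+1), ((i).factorial : ℚ)) * ∏ i ∈ range (n+1), (((n+1)+i).factorial : ℚ)) := by
    rw [mul_assoc, hQ12, hQ34, hS1, hS2]
  rw [hden]
  have c1 := Sne n
  have c2 := Sne (n+1)
  have c3 := Cne n
  have c4 := Cne (n+1)
  field_simp
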